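/- Let σ, σ′, η, Ê, v be positive reals and ρ ∈ [−1,1] with |ρ| ≤ vÊ/(σ′η). For θ ∈ ℝ define Δ(θ) = √(σ² − 2θρσ′σ + θ²σ′²) and g(θ) = (Δ(θ)η + |θ|Êv)/v. Then g(θ) ≥ g(0) = ση/v for every θ ∈ ℝ; that is, the minimum of g over ℝ is attained at θ = 0. -/
import Mathlib


/-- in the weighted MLMC level recursion, when
`|ρ| ≤ vÊ/(σ'η)` the cost function `g` is minimised over ℝ at `θ = 0`,
with minimal value `ση/v`. -/
theorem wmlmc_zero_weight_optimal
    (σ σ' η E v ρ : ℝ)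
    (hσ : 0 < σ) (hσ' : 0 < σ') (hη : 0 < η) (hE : 0 < E) (hv : 0 < v)
    (hρ : ρ ∈ Set.Icc (-1 : ℝ) 1)
    (hcond : |ρ| ≤ v * E / (σ' * η))
    (Δ g : ℝ → ℝ)
    (hΔ : ∀ θ, Δ θ = Real.sqrt (σ ^ 2 - 2 * θ * ρ * σ' * σ + θ ^ 2 * σ' ^ 2))
    (hg : ∀ θ, g θ = (Δ θ * η + |θ| * E * v) / v) :
    (∀ θ : ℝ, g 0 ≤ g θ) ∧ g 0 = σ * η / v := by
  have hg0 : g 0 = σ * η / v := by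
    rw [hg, hΔ]
    simp [abs_zero]
    rw [Real.sqrt_sq hσ.le]
  refine ⟨fun θ => ?_, hg0⟩
  rw [hg0, hg]
  have hρ2 : ρ ^ 2 ≤ 1 := by
    obtain ⟨h1, h2⟩ := hρ; nlinarith
  have hkey : (σ - |θ| * σ' * |ρ|) ^ 2 ≤ σ ^ 2 - 2 * θ * ρ * σ' * σ + θ ^ 2 * σ' ^ 2 := by
    have h1 : θ * ρ ≤ |θ| * |ρ| := by
      rw [← abs_mul]; exact le_abs_self _
    have t1 : 0 ≤ σ * σ' * (|θ| * |ρ| - θ * ρ) :=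
      mul_nonneg (mul_pos hσ hσ').le (by linarith)
    have t2 : 0 ≤ θ ^ 2 * σ' ^ 2 * (1 - ρ ^ 2) :=
      mul_nonneg (by positivity) (by linarith)
    have habs : (|θ| * |ρ|) ^ 2 = θ ^ 2 * ρ ^ 2 := by
      rw [mul_pow, sq_abs, sq_abs]
    nlinarith [habs, t1, t2]
  have h2 : σ - |θ| * σ' * |ρ| ≤ Δ θ := by
    rw [hΔ]
    have hs := Real.sqrt_le_sqrt hkey
    rw [Real.sqrt_sq_eq_abs] at hs
    exact (le_abs_self _).trans hs
  have hcond' : |ρ| * (σ' * η) ≤ v * E := by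
    rw [div_eq_mul_inv] at hcond
    have := mul_le_mul_of_nonneg_right hcond (mul_pos hσ' hη).le
    calc |ρ| * (σ' * η) ≤ v * E * (σ' * η)⁻¹ * (σ' * η) := this
      _ = v * E := by field_simp
  have hnum : σ * η ≤ Δ θ * η + |θ| * E * v := by
    nlinarith [abs_nonneg θ, abs_nonneg ρ]
  exact div_le_div_of_nonneg_right hnum hv.le
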